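/- arXiv:0708.4177 — 6 statements merged into one kernel-verified Lean document; each statement's English description precedes it below -/
import Mathlib

section
/- (Necessity in Proposition 1.) Let 0 < M ≤ ∞ and, for each μ ∈ (0,M), let f_μ be a probability mass function on ℕ with mean Σ_n n f_μ(n) = μ. Suppose the family is closed under binomial subsampling in the sense that T_p f_μ = f_{pμ} for every μ ∈ (0,M) and every p ∈ (0,1]. Then there exists a real analytic function g on (−2M, 0) such that Σ_n f_μ(n) t^n = g(μ(t−1)) for all μ ∈ (0,M) and all t ∈ (−1,1). -/
open scoped BigOperators ENNReal

/-- `f` is a probability mass function on `ℕ`. -/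
def IsPMF (f : ℕ → ℝ) : Prop := (∀ n, 0 ≤ f n) ∧ HasSum f 1

/-- The binomial subsampling (independent `p`-thinning) of `f`:
`(T_p f)(m) = ∑_{n ≥ m} f(n) * C(n,m) * p^m * (1-p)^(n-m)` (written with `n = m + k`). -/
noncomputable def thin (p : ℝ) (f : ℕ → ℝ) : ℕ → ℝ :=
  fun m => ∑' k : ℕ, f (m + k) * ((m + k).choose m : ℝ) * p ^ m * (1 - p) ^ k

/-- The interval `(-2M, 0)` of real numbers, where `0 < M ≤ ∞` is an extended real number. -/
def negIoo (M : ℝ≥0∞) : Set ℝ := {x : ℝ | x < 0 ∧ ENNReal.ofReal (-x) < 2 * M}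

lemma IsPMF.le_one {f : ℕ → ℝ} (hf : IsPMF f) (n : ℕ) : f n ≤ 1 :=
  le_hasSum hf.2 n fun m _ => hf.1 m

lemma summable_pgf {f : ℕ → ℝ} (hf : IsPMF f) {t : ℝ} (ht : |t| ≤ 1) :
    Summable fun n => f n * t ^ n := by
  apply Summable.of_abs
  refine Summable.of_nonneg_of_le (fun n => abs_nonneg _) (fun n => ?_) hf.2.summable
  rw [abs_mul, abs_pow, abs_of_nonneg (hf.1 n)]
  calc f n * |t| ^ n ≤ f n * 1 :=
        mul_le_mul_of_nonneg_left (pow_le_one₀ (abs_nonneg t) ht) (hf.1 n)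
    _ = f n := mul_one _

lemma thin_pgf {f : ℕ → ℝ} (hf : IsPMF f) {p : ℝ} (hp : p ∈ Set.Ioc (0:ℝ) 1)
    {t : ℝ} (ht : |t| ≤ 1) :
    ∑' m, thin p f m * t ^ m = ∑' n, f n * (1 - p + p * t) ^ n := by
  obtain ⟨hp0, hp1⟩ := hp
  have h1p : (0:ℝ) ≤ 1 - p := by linarith
  set G : ℕ × ℕ → ℝ :=
    fun nm => f nm.1 * (nm.1.choose nm.2 : ℝ) * (p * t) ^ nm.2 * (1 - p) ^ (nm.1 - nm.2)
    with hGdef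
  have habs : ∀ nm : ℕ × ℕ,
      |G nm| = f nm.1 * (nm.1.choose nm.2 : ℝ) * (p * |t|) ^ nm.2 * (1 - p) ^ (nm.1 - nm.2) := by
    intro nm
    rw [hGdef]
    rw [abs_mul, abs_mul, abs_mul, abs_pow, abs_pow, abs_of_nonneg (hf.1 _),
      abs_of_nonneg (Nat.cast_nonneg _), abs_of_nonneg h1p, abs_mul, abs_of_nonneg hp0.le]
  have hGzero : ∀ n : ℕ, ∀ m ∉ Finset.range (n+1), G (n, m) = 0 := by
    intro n m hm
    have : n < m := by simp only [Finset.mem_range] at hm; omega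
    simp [hGdef, Nat.choose_eq_zero_of_lt this]
  have hrow0 : ∀ (n : ℕ) (u : ℝ),
      (∑ m ∈ Finset.range (n+1), f n * (n.choose m : ℝ) * u ^ m * (1 - p) ^ (n - m))
        = f n * (u + (1 - p)) ^ n := by
    intro n u
    rw [add_pow, Finset.mul_sum]
    exact Finset.sum_congr rfl fun m hm => by ring
  have habs_sum : Summable fun nm => |G nm| := by
    rw [summable_prod_of_nonneg (fun nm => abs_nonneg _)]
    constructor
    · intro n
      apply summable_of_ne_finset_zero (s := Finset.range (n+1))
      intro m hm
      rw [habs]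
      have : n < m := by simp only [Finset.mem_range] at hm; omega
      simp [Nat.choose_eq_zero_of_lt this]
    · have hcalc : ∀ n : ℕ, (∑' m, |G (n, m)|) = f n * (p * |t| + (1 - p)) ^ n := by
        intro n
        rw [tsum_eq_sum (s := Finset.range (n+1)) (fun m hm => by
          rw [habs]
          have : n < m := by simp only [Finset.mem_range] at hm; omega
          simp [Nat.choose_eq_zero_of_lt this])]
        simp_rw [habs]
        exact hrow0 n (p * |t|)
      apply Summable.congr _ (fun n => (hcalc n).symm)
      refine Summable.of_nonneg_of_le
        (fun n => mul_nonneg (hf.1 n) (pow_nonneg (by positivity) n)) (fun n => ?_)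
        hf.2.summable
      have hb : p * |t| + (1 - p) ≤ 1 := by nlinarith [abs_nonneg t]
      calc f n * (p * |t| + (1 - p)) ^ n ≤ f n * 1 :=
            mul_le_mul_of_nonneg_left (pow_le_one₀ (by positivity) hb) (hf.1 n)
        _ = f n := mul_one _
  have hGsum : Summable G := habs_sum.of_abs
  set e : ℕ × ℕ → ℕ × ℕ := fun mk => (mk.1 + mk.2, mk.1) with hedef
  have he : Function.Injective e := by
    rintro ⟨a1, a2⟩ ⟨b1, b2⟩ h
    simp only [hedef, Prod.mk.injEq] at h
    obtain ⟨h1, h2⟩ := h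
    subst h2
    simp_all
  have hzero : ∀ nm ∉ Set.range e, G nm = 0 := by
    rintro ⟨n, m⟩ hnm
    by_cases hle : m ≤ n
    · exact absurd ⟨(m, n - m), by simp [hedef, Nat.add_sub_cancel' hle]⟩ hnm
    · simp [hGdef, Nat.choose_eq_zero_of_lt (not_le.1 hle)]
  have hGe : ∀ m k : ℕ, G (e (m, k)) = f (m + k) * ((m + k).choose m : ℝ) * (p * t) ^ m
      * (1 - p) ^ k := by
    intro m k
    simp [hGdef, hedef, Nat.add_sub_cancel_left]
  have hGesum : Summable (G ∘ e) := (he.summable_iff hzero).2 hGsum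
  calc ∑' m, thin p f m * t ^ m
      = ∑' m, ∑' k, G (e (m, k)) := by
        refine tsum_congr fun m => ?_
        rw [thin, ← tsum_mul_right]
        refine tsum_congr fun k => ?_
        rw [hGe, mul_pow]
        ring
    _ = ∑' mk : ℕ × ℕ, (G ∘ e) mk := (Summable.tsum_prod hGesum).symm
    _ = ∑' nm : ℕ × ℕ, G nm := he.tsum_eq (Function.support_subset_iff'.2 hzero)
    _ = ∑' n, ∑' m, G (n, m) := Summable.tsum_prod hGsum
    _ = ∑' n, f n * (1 - p + p * t) ^ n := by
        refine tsum_congr fun n => ?_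
        rw [tsum_eq_sum (hGzero n), hGdef]
        have := hrow0 n (p * t)
        rw [this]
        ring_nf

/-- necessity in Proposition 1: if `(f_μ)_{0<μ<M}` is a family of pmfs on `ℕ`
with mean `μ` which is closed under binomial subsampling (`T_p f_μ = f_{pμ}`), then there is
a real analytic function `g` on `(-2M,0)` with `Φ_{f_μ}(t) = g(μ(t-1))` for all
`μ ∈ (0,M)` and `t ∈ (-1,1)`. -/
theorem pgf_form_of_closed_thin (M : ℝ≥0∞) (hM : 0 < M) (f : ℝ → ℕ → ℝ)
    (hpmf : ∀ μ : ℝ, 0 < μ → ENNReal.ofReal μ < M → IsPMF (f μ))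
    (hmean : ∀ μ : ℝ, 0 < μ → ENNReal.ofReal μ < M →
      HasSum (fun n : ℕ => (n : ℝ) * f μ n) μ)
    (hclosed : ∀ μ : ℝ, 0 < μ → ENNReal.ofReal μ < M →
      ∀ p ∈ Set.Ioc (0 : ℝ) 1, thin p (f μ) = f (p * μ)) :
    ∃ g : ℝ → ℝ, AnalyticOnNhd ℝ g (negIoo M) ∧
      ∀ μ : ℝ, 0 < μ → ENNReal.ofReal μ < M →
        ∀ t ∈ Set.Ioo (-1 : ℝ) 1, ∑' n : ℕ, f μ n * t ^ n = g (μ * (t - 1)) := by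
  classical
  -- One-sided consistency
  have cons1 : ∀ μ1 μ2 : ℝ, 0 < μ1 → ENNReal.ofReal μ1 < M → 0 < μ2 →
      ENNReal.ofReal μ2 < M → μ2 ≤ μ1 →
      ∀ t1 ∈ Set.Ioo (-1:ℝ) 1, ∀ t2 ∈ Set.Ioo (-1:ℝ) 1, μ1 * (t1 - 1) = μ2 * (t2 - 1) →
      (∑' n, f μ1 n * t1 ^ n) = ∑' n, f μ2 n * t2 ^ n := by
    intro μ1 μ2 h1 h1M h2 h2M hle t1 ht1 t2 ht2 heq
    set p := μ2 / μ1 with hpdef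
    have hpmem : p ∈ Set.Ioc (0:ℝ) 1 := ⟨div_pos h2 h1, (div_le_one h1).2 hle⟩
    have hfp : thin p (f μ1) = f μ2 := by
      rw [hclosed μ1 h1 h1M p hpmem,
        show p * μ1 = μ2 from div_mul_cancel₀ μ2 (ne_of_gt h1)]
    have ht2abs : |t2| ≤ 1 := abs_le.2 ⟨ht2.1.le, ht2.2.le⟩
    have hkey := thin_pgf (hpmf μ1 h1 h1M) hpmem ht2abs
    rw [hfp] at hkey
    have harg : 1 - p + p * t2 = t1 := by
      have hμ1 : μ1 ≠ 0 := ne_of_gt h1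
      rw [hpdef]
      field_simp
      ring_nf at heq ⊢
      nlinarith [heq]
    rw [harg] at hkey
    exact hkey.symm
  have cons : ∀ μ1 μ2 : ℝ, 0 < μ1 → ENNReal.ofReal μ1 < M → 0 < μ2 →
      ENNReal.ofReal μ2 < M →
      ∀ t1 ∈ Set.Ioo (-1:ℝ) 1, ∀ t2 ∈ Set.Ioo (-1:ℝ) 1, μ1 * (t1 - 1) = μ2 * (t2 - 1) →
      (∑' n, f μ1 n * t1 ^ n) = ∑' n, f μ2 n * t2 ^ n := by
    intro μ1 μ2 h1 h1M h2 h2M t1 ht1 t2 ht2 heq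
    rcases le_total μ2 μ1 with h | h
    · exact cons1 μ1 μ2 h1 h1M h2 h2M h t1 ht1 t2 ht2 heq
    · exact (cons1 μ2 μ1 h2 h2M h1 h1M h t2 ht2 t1 ht1 heq.symm).symm
  -- selection of a suitable mean for each point of negIoo M
  set sel : ℝ → ℝ := fun x => ((-x)/2 + (if M = ⊤ then -x else min M.toReal (-x)))/2
    with hseldef
  have hselspec : ∀ x ∈ negIoo M, (-x)/2 < sel x ∧ 0 < sel x ∧ ENNReal.ofReal (sel x) < M := by
    intro x hx
    obtain ⟨hx0, hx2⟩ := hx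
    have hxpos : 0 < -x := neg_pos.2 hx0
    by_cases htop : M = ⊤
    · have h1 : (-x)/2 < sel x := by
        rw [hseldef]; simp only [htop, if_pos]; linarith
      exact ⟨h1, by linarith, by simp [htop]⟩
    · have h2M : (2 * M) ≠ ⊤ := ENNReal.mul_ne_top (by simp) htop
      have hxlt : -x < (2 * M).toReal := (ENNReal.ofReal_lt_iff_lt_toReal hxpos.le h2M).1 hx2
      have h2Mt : (2 * M).toReal = 2 * M.toReal := by
        rw [ENNReal.toReal_mul]; norm_num
      have hMt : -x/2 < M.toReal := by rw [h2Mt] at hxlt; linarith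
      have hmin : -x/2 < min M.toReal (-x) := lt_min hMt (by linarith)
      have hsx : sel x = ((-x)/2 + min M.toReal (-x))/2 := by rw [hseldef]; simp [htop]
      have h1 : (-x)/2 < sel x := by rw [hsx]; linarith
      have hlt : sel x < M.toReal := by
        have := min_le_left M.toReal (-x)
        rw [hsx]; linarith
      have hMtpos : 0 < M.toReal := lt_trans (by linarith) hMt
      refine ⟨h1, by linarith, ?_⟩
      calc ENNReal.ofReal (sel x) < ENNReal.ofReal M.toReal :=
            (ENNReal.ofReal_lt_ofReal_iff hMtpos).2 hlt
        _ = M := ENNReal.ofReal_toReal htop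
  set g : ℝ → ℝ := fun x => ∑' n, f (sel x) n * (1 + x / sel x) ^ n with hgdef
  -- membership of μ*(t-1) in negIoo M
  have hmem : ∀ μ : ℝ, 0 < μ → ENNReal.ofReal μ < M → ∀ t ∈ Set.Ioo (-1:ℝ) 1,
      μ * (t - 1) ∈ negIoo M := by
    intro μ hμ hμM t ht
    constructor
    · have : t - 1 < 0 := by linarith [ht.2]
      exact mul_neg_of_pos_of_neg hμ this
    · have h1 : -(μ * (t - 1)) = μ * (1 - t) := by ring
      have h2 : μ * (1 - t) < 2 * μ := by nlinarith [ht.1, ht.2]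
      calc ENNReal.ofReal (-(μ * (t - 1))) < ENNReal.ofReal (2 * μ) := by
            rw [h1]; exact (ENNReal.ofReal_lt_ofReal_iff (by linarith)).2 h2
        _ = 2 * ENNReal.ofReal μ := by
            rw [ENNReal.ofReal_mul (by norm_num)]
            norm_num
        _ < 2 * M := by
            exact (ENNReal.mul_lt_mul_iff_right (by norm_num) (by norm_num)).2 hμM
  -- the key pointwise identity
  have key : ∀ μ : ℝ, 0 < μ → ENNReal.ofReal μ < M →
      ∀ t ∈ Set.Ioo (-1:ℝ) 1, (∑' n, f μ n * t ^ n) = g (μ * (t - 1)) := by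
    intro μ hμ hμM t ht
    set x := μ * (t - 1) with hxdef
    obtain ⟨hs1, hs2, hs3⟩ := hselspec x (hmem μ hμ hμM t ht)
    have hsne : sel x ≠ 0 := ne_of_gt hs2
    have ht' : 1 + x / sel x ∈ Set.Ioo (-1:ℝ) 1 := by
      have hx0 : x < 0 := (hmem μ hμ hμM t ht).1
      constructor
      · have h2 : (-2:ℝ) < x / sel x := by
          rw [lt_div_iff₀ hs2]; linarith
        linarith
      · have : x / sel x < 0 := div_neg_of_neg_of_pos hx0 hs2
        linarith
    have hprod : sel x * ((1 + x / sel x) - 1) = x := by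
      field_simp; ring
    exact cons μ (sel x) hμ hμM hs2 hs3 t ht _ ht' (by rw [hprod])
  refine ⟨g, ?_, key⟩
  -- analyticity
  intro x0 hx0
  obtain ⟨hs1, hs2, hs3⟩ := hselspec x0 hx0
  set μ := sel x0 with hμdef
  have hpm := hpmf μ hs2 hs3
  set P := FormalMultilinearSeries.ofScalars ℝ (f μ) with hPdef
  have hrad : (1 : ℝ≥0∞) ≤ P.radius := by
    have := P.le_radius_of_bound 1 (r := 1) (fun n => by
      rw [hPdef, FormalMultilinearSeries.ofScalars_norm]
      simp only [NNReal.coe_one, one_pow, mul_one, Real.norm_eq_abs,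
        abs_of_nonneg (hpm.1 n)]
      exact hpm.le_one n)
    simpa using this
  have hball := P.hasFPowerSeriesOnBall (lt_of_lt_of_le zero_lt_one hrad)
  have hx00 : x0 < 0 := hx0.1
  have ht0 : 1 + x0 / μ ∈ Set.Ioo (-1:ℝ) 1 := by
    constructor
    · have h2 : (-2:ℝ) < x0 / μ := by
        rw [lt_div_iff₀ hs2]; linarith
      linarith
    · have : x0 / μ < 0 := div_neg_of_neg_of_pos hx00 hs2
      linarith
  have hA : AnalyticAt ℝ P.sum (1 + x0 / μ) := by
    apply hball.analyticAt_of_mem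
    rw [EMetric.mem_ball, edist_zero_right]
    refine lt_of_lt_of_le ?_ hrad
    rw [← ENNReal.coe_one, enorm_eq_nnnorm, ENNReal.coe_lt_coe, ← NNReal.coe_lt_coe]
    simp only [coe_nnnorm, NNReal.coe_one, Real.norm_eq_abs]
    exact abs_lt.2 ⟨ht0.1, ht0.2⟩
  have hAff : AnalyticAt ℝ (fun x : ℝ => 1 + x / μ) x0 := by
    apply AnalyticAt.add analyticAt_const
    exact (analyticAt_id).div analyticAt_const (ne_of_gt hs2)
  have hcomp : AnalyticAt ℝ (P.sum ∘ fun x : ℝ => 1 + x / μ) x0 := AnalyticAt.comp (f := fun x : ℝ => 1 + x / μ) hA hAff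
  have hPsum : ∀ y : ℝ, P.sum y = ∑' n, f μ n * y ^ n := by
    intro y
    rw [show P.sum y = FormalMultilinearSeries.ofScalarsSum (f μ) y from rfl,
      FormalMultilinearSeries.ofScalars_sum_eq]
    exact tsum_congr fun n => by rw [smul_eq_mul]
  apply hcomp.congr
  have hopen : Set.Ioo (-(2*μ)) 0 ∈ nhds x0 := by
    apply isOpen_Ioo.mem_nhds
    constructor
    · linarith
    · exact hx00
  refine Filter.eventuallyEq_of_mem hopen fun x hx => ?_
  obtain ⟨hxa, hxb⟩ := hx
  show P.sum (1 + x / μ) = g x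
  have htx : 1 + x / μ ∈ Set.Ioo (-1:ℝ) 1 := by
    constructor
    · have h2 : (-2:ℝ) < x / μ := by
        rw [lt_div_iff₀ hs2]; linarith
      linarith
    · have : x / μ < 0 := div_neg_of_neg_of_pos hxb hs2
      linarith
  have hxx : μ * ((1 + x / μ) - 1) = x := by field_simp; ring
  rw [hPsum]
  have := key μ hs2 hs3 _ htx
  rw [hxx] at this
  exact this
end

section
/- (Boundary extension step in the proof of Proposition 1.) Let 0 < M < ∞ and let g be a real analytic function on (−2M, 0). Suppose that for every μ ∈ (0, M), the numbers c_k(μ) = g^{(k)}(−μ) · μ^k / k! satisfy c_k(μ) ≥ 0 for all k ≥ 0 and Σ_{k≥0} c_k(μ) = 1 (i.e., t ↦ g(μ(t−1)) is the pgf of a pmf). Then the same holds at μ = M: g^{(k)}(−M) · M^k / k! ≥ 0 for all k ≥ 0 and Σ_{k≥0} g^{(k)}(−M) · M^k / k! = 1, so that k ↦ g^{(k)}(−M) M^k / k! is a probability mass function on ℕ whose pgf is g(M(t−1)). -/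
open scoped BigOperators

open Filter Set Topology

/-- If `d * μ^k / k! ≥ 0` with `μ > 0` then `d ≥ 0`. -/
lemma nonneg_of_taylor_coeff_nonneg {d μ : ℝ} {k : ℕ}
    (hμ : 0 < μ) (h : 0 ≤ d * μ ^ k / (k.factorial : ℝ)) : 0 ≤ d := by
  by_contra hlt
  push_neg at hlt
  have : d * μ ^ k / (k.factorial : ℝ) < 0 :=
    div_neg_of_neg_of_pos (mul_neg_of_neg_of_pos hlt (pow_pos hμ k))
      (by positivity)
  linarith

/-- Key analytic lemma: if `g` is analytic on `(-2m, 0)`, its derivatives at `-m` are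
nonnegative, and the Taylor coefficients at `-m` are summable at radius `m`, then the Taylor
series of `g` at `-m` converges to `g` on all of `(-2m, 0)`. -/
lemma taylor_hasSum_aux (m : ℝ) (hm : 0 < m) (g : ℝ → ℝ)
    (hg : AnalyticOnNhd ℝ g (Set.Ioo (-(2 * m)) 0))
    (hpos : ∀ k : ℕ, 0 ≤ iteratedDeriv k g (-m))
    (hsum : Summable fun k : ℕ => iteratedDeriv k g (-m) / k.factorial * m ^ k) :
    ∀ x ∈ Set.Ioo (-(2 * m)) 0,
      HasSum (fun k : ℕ => iteratedDeriv k g (-m) / k.factorial * (x + m) ^ k) (g x) := by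
  have hmem : -m ∈ Set.Ioo (-(2 * m)) 0 := ⟨by linarith, by linarith⟩
  obtain ⟨p, r, hpr⟩ := hg (-m) hmem
  have hcoeff : ∀ n : ℕ, p.coeff n = iteratedDeriv n g (-m) / n.factorial := by
    intro n
    have h1 := hpr.factorial_smul (1 : ℝ) n
    have h2 : iteratedDeriv n g (-m) = iteratedFDeriv ℝ n g (-m) (fun _ => (1:ℝ)) :=
      iteratedDeriv_eq_iteratedFDeriv
    have h3 : p n (fun _ => (1:ℝ)) = p.coeff n := rfl
    rw [h3] at h1
    rw [h2, ← h1, nsmul_eq_mul]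
    field_simp
  have hcpos : ∀ n : ℕ, 0 ≤ p.coeff n := by
    intro n; rw [hcoeff]; exact div_nonneg (hpos n) (by positivity)
  have hrad : ENNReal.ofReal m ≤ p.radius := by
    rw [ENNReal.ofReal]
    apply p.le_radius_of_summable
    refine hsum.congr fun n => ?_
    rw [FormalMultilinearSeries.norm_apply_eq_norm_coef, hcoeff,
      Real.norm_eq_abs, abs_of_nonneg (hcoeff n ▸ hcpos n), Real.coe_toNNReal _ hm.le]
  have hrpos : (0 : ENNReal) < p.radius :=
    lt_of_lt_of_le (by simp [hm]) hrad
  have hnn : ∀ x ∈ Set.Ioo (-(2 * m)) 0, ((‖x + m‖₊ : ENNReal)) < p.radius := by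
    intro x hx
    have habs : ‖x + m‖ < m := by
      rw [Real.norm_eq_abs, abs_lt]; exact ⟨by linarith [hx.1], by linarith [hx.2]⟩
    calc ((‖x + m‖₊ : ENNReal)) = ENNReal.ofReal ‖x + m‖ := (ofReal_norm _).symm
      _ < ENNReal.ofReal m := (ENNReal.ofReal_lt_ofReal_iff hm).2 habs
      _ ≤ p.radius := hrad
  set G : ℝ → ℝ := fun x => p.sum (x + m) with hG
  have hGball : HasFPowerSeriesOnBall G p (-m) p.radius :=
    { r_le := le_rfl
      r_pos := hrpos
      hasSum := by
        intro y hy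
        have h := p.hasSum (by simpa [EMetric.mem_ball, edist_eq_enorm_sub] using hy)
        simp only [hG]
        rw [show -m + y + m = y by ring]
        exact h }
  have hGanal : AnalyticOnNhd ℝ G (Set.Ioo (-(2 * m)) 0) := by
    intro x hx
    apply hGball.analyticOnNhd
    rw [EMetric.mem_ball, edist_eq_enorm_sub, sub_neg_eq_add]
    exact hnn x hx
  have heq : Set.EqOn g G (Set.Ioo (-(2 * m)) 0) := by
    apply hg.eqOn_of_preconnected_of_eventuallyEq hGanal (convex_Ioo _ _).isPreconnected hmem
    have hopen : Metric.eball (-m : ℝ) r ∈ 𝓝 (-m) := EMetric.ball_mem_nhds _ hpr.r_pos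
    filter_upwards [hopen] with y hy
    have hy' : (y + m) ∈ Metric.eball (0 : ℝ) r := by
      rw [EMetric.mem_ball, edist_eq_enorm_sub, sub_zero]
      rw [EMetric.mem_ball, edist_eq_enorm_sub, sub_neg_eq_add] at hy
      exact hy
    have hs := hpr.sum hy'
    rw [show -m + (y + m) = y by ring] at hs
    simpa [hG] using hs
  intro x hx
  have hmem0 : (x + m) ∈ Metric.eball (0 : ℝ) p.radius := by
    rw [EMetric.mem_ball, edist_eq_enorm_sub, sub_zero]
    exact hnn x hx
  have h := hGball.hasSum hmem0
  rw [show -m + (x + m) = x by ring] at h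
  rw [heq hx]
  rw [show (fun n : ℕ => iteratedDeriv n g (-m) / n.factorial * (x + m) ^ n)
      = (fun n : ℕ => p n fun _ => (x + m)) from funext fun n => by
    rw [FormalMultilinearSeries.apply_eq_pow_smul_coeff, hcoeff, smul_eq_mul]; ring]
  exact h

/-- boundary extension step in the proof of Proposition 1: let `0 < M < ∞`
and let `g` be real analytic on `(-2M,0)` such that for every `μ ∈ (0,M)` the numbers
`c_k(μ) = g^{(k)}(-μ) μ^k / k!` are nonnegative and sum to `1` (i.e. `t ↦ g(μ(t-1))` is a
pgf). Then the same holds at `μ = M`, and `k ↦ g^{(k)}(-M) M^k / k!` is a pmf on `ℕ` whose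
pgf is `g(M(t-1))`. -/
theorem pgf_extends_to_boundary (M : ℝ) (hM : 0 < M) (g : ℝ → ℝ)
    (hg : AnalyticOnNhd ℝ g (Set.Ioo (-(2 * M)) 0))
    (hpgf : ∀ μ ∈ Set.Ioo (0 : ℝ) M,
      (∀ k : ℕ, 0 ≤ iteratedDeriv k g (-μ) * μ ^ k / k.factorial) ∧
      HasSum (fun k : ℕ => iteratedDeriv k g (-μ) * μ ^ k / k.factorial) 1) :
    (∀ k : ℕ, 0 ≤ iteratedDeriv k g (-M) * M ^ k / k.factorial) ∧
    HasSum (fun k : ℕ => iteratedDeriv k g (-M) * M ^ k / k.factorial) 1 ∧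
    ∀ t ∈ Set.Ioo (-1 : ℝ) 1,
      ∑' k : ℕ, (iteratedDeriv k g (-M) * M ^ k / k.factorial) * t ^ k = g (M * (t - 1)) := by
  -- continuity of derivatives
  have hcont : ∀ k : ℕ, Filter.Tendsto (fun μ : ℝ => iteratedDeriv k g (-μ)) (𝓝[<] M)
      (𝓝 (iteratedDeriv k g (-M))) := by
    intro k
    have h1 : AnalyticOnNhd ℝ (iteratedDeriv k g) (Set.Ioo (-(2 * M)) 0) := by
      rw [iteratedDeriv_eq_iterate]; exact hg.iterated_deriv k
    have h2 : ContinuousAt (iteratedDeriv k g) (-M) :=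
      (h1 (-M) ⟨by linarith, by linarith⟩).continuousAt
    exact (h2.comp continuous_neg.continuousAt).tendsto.mono_left nhdsWithin_le_nhds
  have hev : ∀ᶠ μ in 𝓝[<] M, μ ∈ Set.Ioo (0 : ℝ) M := by
    apply Ioo_mem_nhdsLT_of_mem
    exact ⟨hM, le_rfl⟩
  -- nonnegativity of derivatives at -M
  have hposM : ∀ k : ℕ, 0 ≤ iteratedDeriv k g (-M) := by
    intro k
    refine ge_of_tendsto (hcont k) ?_
    filter_upwards [hev] with μ hμ
    exact nonneg_of_taylor_coeff_nonneg hμ.1 ((hpgf μ hμ).1 k)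
  have hc1 : ∀ k : ℕ, 0 ≤ iteratedDeriv k g (-M) * M ^ k / k.factorial := by
    intro k
    exact div_nonneg (mul_nonneg (hposM k) (by positivity)) (by positivity)
  -- partial sums bounded by 1
  have hpart : ∀ n : ℕ,
      ∑ k ∈ Finset.range n, iteratedDeriv k g (-M) * M ^ k / k.factorial ≤ 1 := by
    intro n
    have ht : Filter.Tendsto
        (fun μ : ℝ => ∑ k ∈ Finset.range n, iteratedDeriv k g (-μ) * μ ^ k / k.factorial)
        (𝓝[<] M) (𝓝 (∑ k ∈ Finset.range n, iteratedDeriv k g (-M) * M ^ k / k.factorial)) := by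
      apply tendsto_finset_sum
      intro k _
      exact ((hcont k).mul (((continuous_pow k).tendsto M).mono_left
        nhdsWithin_le_nhds)).div_const _
    refine le_of_tendsto ht ?_
    filter_upwards [hev] with μ hμ
    exact sum_le_hasSum _ (fun k _ => (hpgf μ hμ).1 k) (hpgf μ hμ).2
  have hsummable : Summable fun k : ℕ => iteratedDeriv k g (-M) * M ^ k / k.factorial :=
    summable_of_sum_range_le hc1 hpart
  have htsumle : (∑' k : ℕ, iteratedDeriv k g (-M) * M ^ k / k.factorial) ≤ 1 :=
    hsummable.tsum_le_of_sum_range_le hpart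
  -- Taylor expansion of g at -M on all of (-2M, 0)
  have HSM := taylor_hasSum_aux M hM g hg hposM
    (hsummable.congr fun k => by rw [div_mul_eq_mul_div])
  -- lower bound on the tsum
  set S : ℝ := ∑' k : ℕ, iteratedDeriv k g (-M) * M ^ k / k.factorial with hS
  have hlow : ∀ ε : ℝ, 0 < ε → 1 - ε < S := by
    intro ε hε
    set μ0 : ℝ := M / 2 with hμ0def
    have hμ0 : μ0 ∈ Set.Ioo (0 : ℝ) M := ⟨by simp [hμ0def]; linarith, by simp [hμ0def]; linarith⟩
    obtain ⟨hbpos, hbsum⟩ := hpgf μ0 hμ0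
    have hbpos' : ∀ k : ℕ, 0 ≤ iteratedDeriv k g (-μ0) :=
      fun k => nonneg_of_taylor_coeff_nonneg hμ0.1 (hbpos k)
    have hsub : Set.Ioo (-(2 * μ0)) 0 ⊆ Set.Ioo (-(2 * M)) 0 :=
      Set.Ioo_subset_Ioo (by simp [hμ0def]; linarith) le_rfl
    have HSμ := taylor_hasSum_aux μ0 hμ0.1 g (hg.mono hsub) hbpos'
      (hbsum.summable.congr fun k => by rw [div_mul_eq_mul_div])
    -- find y < μ0 with large partial sum
    set f : ℝ → ℝ := fun y => ∑ k ∈ Finset.range 0, (0:ℝ) with hfdummy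
    have hps := hbsum.tendsto_sum_nat
    obtain ⟨n, hn⟩ := (hps.eventually (eventually_gt_nhds (by linarith : 1 - ε / 2 < 1))).exists
    have hfc : Continuous fun y : ℝ =>
        ∑ k ∈ Finset.range n, iteratedDeriv k g (-μ0) * y ^ k / k.factorial := by
      apply continuous_finset_sum
      intro k _
      exact (continuous_const.mul (continuous_pow k)).div_const _
    have hevy : ∀ᶠ y in 𝓝[<] μ0,
        1 - ε < ∑ k ∈ Finset.range n, iteratedDeriv k g (-μ0) * y ^ k / k.factorial := by
      apply ((hfc.tendsto μ0).mono_left nhdsWithin_le_nhds).eventually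
      apply eventually_gt_nhds
      calc (1 : ℝ) - ε < 1 - ε / 2 := by linarith
        _ < _ := hn
    have hevy2 : ∀ᶠ y in 𝓝[<] μ0, y ∈ Set.Ioo (0 : ℝ) μ0 :=
      Ioo_mem_nhdsLT_of_mem ⟨hμ0.1, le_rfl⟩
    obtain ⟨y, hy1, hy2⟩ := (hevy.and hevy2).exists
    -- x := y - μ0
    set x : ℝ := y - μ0 with hx
    have hxmem : x ∈ Set.Ioo (-(2 * μ0)) 0 :=
      ⟨by simp [hx]; nlinarith [hy2.1, hμ0.1], by simp [hx]; linarith [hy2.2]⟩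
    have hgx : HasSum (fun k : ℕ => iteratedDeriv k g (-μ0) / k.factorial * (x + μ0) ^ k) (g x) :=
      HSμ x hxmem
    have hxy : x + μ0 = y := by simp [hx]
    have hgx_lb : 1 - ε < g x := by
      calc 1 - ε < ∑ k ∈ Finset.range n, iteratedDeriv k g (-μ0) * y ^ k / k.factorial := hy1
        _ = ∑ k ∈ Finset.range n, iteratedDeriv k g (-μ0) / k.factorial * (x + μ0) ^ k := by
            refine Finset.sum_congr rfl fun k _ => ?_
            rw [hxy, div_mul_eq_mul_div]
        _ ≤ g x := by
            refine sum_le_hasSum _ (fun k _ => ?_) hgx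
            refine mul_nonneg (div_nonneg (hbpos' k) (by positivity)) ?_
            rw [hxy]; exact pow_nonneg hy2.1.le k
    -- g x ≤ S
    have hxmem' : x ∈ Set.Ioo (-(2 * M)) 0 := hsub hxmem
    have hgxM : HasSum (fun k : ℕ => iteratedDeriv k g (-M) / k.factorial * (x + M) ^ k) (g x) :=
      HSM x hxmem'
    have hxM1 : 0 ≤ x + M := by
      have := hxmem.1
      simp [hμ0def] at this ⊢
      linarith
    have hgx_ub : g x ≤ S := by
      rw [← hgxM.tsum_eq, hS]
      refine hgxM.summable.tsum_le_tsum (fun k => ?_) hsummable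
      rw [div_mul_eq_mul_div]
      gcongr
      · exact hposM k
      · linarith [hxmem'.2]
    linarith
  have hsum1 : S = 1 := by
    refine le_antisymm htsumle ?_
    by_contra hlt
    push_neg at hlt
    have := hlow (1 - S) (by linarith)
    linarith
  have hhs : HasSum (fun k : ℕ => iteratedDeriv k g (-M) * M ^ k / k.factorial) 1 := by
    have := hsummable.hasSum
    rwa [← hS, hsum1] at this
  refine ⟨hc1, hhs, ?_⟩
  intro t ht
  set x : ℝ := M * (t - 1) with hx
  have hxmem : x ∈ Set.Ioo (-(2 * M)) 0 :=
    ⟨by simp [hx]; nlinarith [ht.1], by simp [hx]; nlinarith [ht.2]⟩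
  have h := HSM x hxmem
  have hxM : x + M = M * t := by rw [hx]; ring
  rw [show (fun k : ℕ => iteratedDeriv k g (-M) / k.factorial * (x + M) ^ k)
      = fun k : ℕ => (iteratedDeriv k g (-M) * M ^ k / k.factorial) * t ^ k from
    funext fun k => by rw [hxM, mul_pow]; ring] at h
  exact h.tsum_eq
end

section
/- (Proposition 2, case (ii).) Let 0 < M < ∞ and let g be a real analytic function on (−2M, 0) such that for each μ ∈ (0, M] there is a probability mass function f_μ on ℕ with Σ_n f_μ(n) t^n = g(μ(t−1)) for all t ∈ (−1,1). Suppose moreover that M is maximal: for every μ > M there is no pmf h on ℕ with Σ_n h(n) t^n = g(μ(t−1)) for all t ∈ (max(−1, 1 − 2M/μ), 1). Then: (a) for every μ ∈ (0, M), f_μ = T_{μ/M} f_M, i.e., every member of the family is an independent p-thinning of f_M; and (b) f_M is a top inverse: for every p ∈ (0,1) there is no pmf h on ℕ with T_p h = f_M. -/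
open scoped BigOperators ENNReal

/-- Summing over the antidiagonal. -/
lemma antidiag_sum (f : ℕ → ℝ) (u v : ℝ) (n : ℕ) :
    ∑ x ∈ Finset.HasAntidiagonal.antidiagonal n,
      f (x.1 + x.2) * ((x.1 + x.2).choose x.1 : ℝ) * u ^ x.1 * v ^ x.2
      = f n * (u + v) ^ n := by
  rw [Finset.Nat.sum_antidiagonal_eq_sum_range_succ_mk, add_pow, Finset.mul_sum]
  refine Finset.sum_congr rfl fun k hk => ?_
  have hk' : k ≤ n := Nat.lt_succ_iff.mp (Finset.mem_range.mp hk)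
  rw [Nat.add_sub_cancel' hk']
  ring

lemma pgf_summable {f : ℕ → ℝ} (hf : IsPMF f) {q : ℝ} (hq : |q| ≤ 1) :
    Summable fun n => f n * q ^ n := by
  refine Summable.of_norm_bounded hf.2.summable fun n => ?_
  rw [norm_mul, Real.norm_eq_abs, Real.norm_eq_abs, abs_of_nonneg (hf.1 n), abs_pow]
  calc f n * |q| ^ n ≤ f n * 1 :=
        mul_le_mul_of_nonneg_left (pow_le_one₀ (abs_nonneg q) hq) (hf.1 n)
    _ = f n := mul_one _

set_option maxHeartbeats 1600000 in
/-- Key lemma: the pgf of the thinning. -/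
lemma thin_hasSum {f : ℕ → ℝ} (hf : IsPMF f) {p t : ℝ} (hp0 : 0 < p) (hp1 : p ≤ 1)
    (ht : |t| ≤ 1) :
    HasSum (fun m => thin p f m * t ^ m) (∑' n : ℕ, f n * (1 - p + p * t) ^ n) := by
  obtain ⟨hf0, hf1⟩ := hf
  have h1p : (0:ℝ) ≤ 1 - p := by linarith
  set F : ℕ × ℕ → ℝ := fun x =>
    f (x.1 + x.2) * ((x.1 + x.2).choose x.1 : ℝ) * (p * t) ^ x.1 * (1 - p) ^ x.2 with hF
  have habs : ∀ x : ℕ × ℕ,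
      |F x| = f (x.1 + x.2) * ((x.1 + x.2).choose x.1 : ℝ) * (p * |t|) ^ x.1
        * (1 - p) ^ x.2 := by
    intro x
    simp only [hF, abs_mul, abs_pow, Nat.abs_cast, abs_of_nonneg (hf0 _),
      abs_of_nonneg h1p, abs_of_nonneg hp0.le]
  set e := Finset.HasAntidiagonal.sigmaAntidiagonalEquivProd (A := ℕ) with he
  have hfiber : ∀ (G : ℕ × ℕ → ℝ) (n : ℕ),
      ∑' y : (Finset.HasAntidiagonal.antidiagonal n : Finset (ℕ × ℕ)), G (e ⟨n, y⟩)
        = ∑ y ∈ Finset.HasAntidiagonal.antidiagonal n, G y := by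
    intro G n
    exact Finset.tsum_subtype (Finset.HasAntidiagonal.antidiagonal n) G
  have hsum_abs : Summable fun x => |F x| := by
    rw [← Equiv.summable_iff e]
    refine (summable_sigma_of_nonneg fun x => abs_nonneg _).2 ⟨fun n => ?_, ?_⟩
    · exact Summable.of_finite
    · refine Summable.of_nonneg_of_le (fun n => tsum_nonneg fun y => abs_nonneg _)
        (fun n => ?_) hf1.summable
      have : ∑' y : (Finset.HasAntidiagonal.antidiagonal n : Finset (ℕ × ℕ)), |F (e ⟨n, y⟩)|
          = f n * (p * |t| + (1 - p)) ^ n := by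
        rw [hfiber (fun y => |F y|) n]
        rw [Finset.sum_congr rfl fun y _ => habs y]
        exact antidiag_sum f (p * |t|) (1 - p) n
      rw [this]
      have hq0 : 0 ≤ p * |t| + (1 - p) := by positivity
      have hq1 : p * |t| + (1 - p) ≤ 1 := by nlinarith [abs_nonneg t]
      calc f n * (p * |t| + (1 - p)) ^ n ≤ f n * 1 := by
            exact mul_le_mul_of_nonneg_left (pow_le_one₀ hq0 hq1) (hf0 n)
        _ = f n := mul_one _
  have hFsumm : Summable F := summable_abs_iff.mp hsum_abs
  have htot : ∑' x, F x = ∑' n : ℕ, f n * (1 - p + p * t) ^ n := by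
    calc ∑' x, F x = ∑' y : Σ n : ℕ, (Finset.HasAntidiagonal.antidiagonal n : Finset (ℕ × ℕ)), F (e y) :=
          (e.tsum_eq F).symm
      _ = ∑' n : ℕ, ∑' y : (Finset.HasAntidiagonal.antidiagonal n : Finset (ℕ × ℕ)), F (e ⟨n, y⟩) :=
          Summable.tsum_sigma (e.summable_iff.mpr hFsumm)
      _ = ∑' n : ℕ, f n * (1 - p + p * t) ^ n := by
          refine tsum_congr fun n => ?_
          rw [hfiber F n, antidiag_sum f (p * t) (1 - p) n]
          ring_nf
  rw [← htot]
  refine HasSum.prod_fiberwise hFsumm.hasSum fun m => ?_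
  have hs := hFsumm.prod_factor m
  have hval : ∑' k, F (m, k) = thin p f m * t ^ m := by
    rw [thin, ← tsum_mul_right]
    exact tsum_congr fun k => by simp only [hF, mul_pow]; ring
  rw [← hval]
  exact hs.hasSum

lemma thin_hasSum_one {f : ℕ → ℝ} (hf : IsPMF f) {p : ℝ} (hp0 : 0 < p) (hp1 : p ≤ 1) :
    HasSum (thin p f) 1 := by
  have h := thin_hasSum hf hp0 hp1 (t := 1) (by norm_num)
  simp only [one_pow, mul_one] at h
  have h11 : (1:ℝ) - p + p = 1 := by ring
  rw [h11] at h
  simp only [one_pow, mul_one] at h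
  rwa [hf.2.tsum_eq] at h

lemma thin_nonneg {f : ℕ → ℝ} (hf : IsPMF f) {p : ℝ} (hp0 : 0 < p) (hp1 : p ≤ 1) (m : ℕ) :
    0 ≤ thin p f m := by
  have h1p : (0:ℝ) ≤ 1 - p := by linarith
  refine tsum_nonneg fun k => ?_
  have h0 := hf.1 (m + k)
  positivity

/-- Uniqueness of power series coefficients. -/
lemma coeff_unique {a b : ℕ → ℝ} (ha : ∀ n, |a n| ≤ 1) (hb : ∀ n, |b n| ≤ 1)
    (heq : ∀ t : ℝ, |t| < 1 → ∑' n, a n * t ^ n = ∑' n, b n * t ^ n) : a = b := by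
  have hsum : ∀ (c : ℕ → ℝ), (∀ n, |c n| ≤ 1) → ∀ t : ℝ, |t| < 1 →
      Summable fun n => c n * t ^ n := by
    intro c hc t ht
    refine Summable.of_norm_bounded
      (summable_geometric_of_lt_one (abs_nonneg t) ht) fun n => ?_
    rw [norm_mul, Real.norm_eq_abs, Real.norm_eq_abs, abs_pow]
    calc |c n| * |t| ^ n ≤ 1 * |t| ^ n := by gcongr; exact hc n
      _ = |t| ^ n := one_mul _
  set G : ℝ → ℝ := fun t => ∑' n, a n * t ^ n with hG
  have hball : ∀ (c : ℕ → ℝ), (∀ n, |c n| ≤ 1) →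
      (∀ t : ℝ, |t| < 1 → G t = ∑' n, c n * t ^ n) →
      HasFPowerSeriesOnBall G (FormalMultilinearSeries.ofScalars ℝ c) 0 1 := by
    intro c hc hGc
    refine ⟨?_, one_pos, ?_⟩
    · refine le_trans ?_ (FormalMultilinearSeries.le_radius_of_bound _ 1 (r := 1)
        fun n => ?_)
      · norm_num
      · rw [FormalMultilinearSeries.ofScalars_norm]
        simpa using hc n
    · intro y hy
      have hy' : |y| < 1 := by
        rw [mem_emetric_ball_zero_iff] at hy
        have h2 : ‖y‖₊ < 1 := by exact_mod_cast (show ((‖y‖₊ : ℝ≥0∞)) < 1 from hy)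
        have h3 : (‖y‖₊ : ℝ) < 1 := by exact_mod_cast h2
        simpa [Real.norm_eq_abs] using h3
      have hs := (hsum c hc y hy').hasSum
      have : G (0 + y) = ∑' n, c n * y ^ n := by rw [zero_add]; exact hGc y hy'
      rw [this]
      convert hs using 2 with n
      · rfl
      rw [FormalMultilinearSeries.ofScalars_apply_eq]
      simp [smul_eq_mul]
  have hPa := hball a ha fun t ht => rfl
  have hPb := hball b hb fun t ht => heq t ht
  have := hPa.hasFPowerSeriesAt.eq_formalMultilinearSeries hPb.hasFPowerSeriesAt
  exact FormalMultilinearSeries.ofScalars_series_injective ℝ ℝ this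

/-- Proposition 2, case (ii): let `0 < M < ∞`, let `g` be real analytic on
`(-2M,0)`, and for each `μ ∈ (0,M]` let `f_μ` be a pmf on `ℕ` with pgf `g(μ(t-1))` on
`(-1,1)`. If `M` is maximal (for `μ > M` no pmf has pgf `g(μ(t-1))` on the appropriate
interval), then (a) every `f_μ`, `μ ∈ (0,M)`, is the `μ/M`-thinning of `f_M`, and
(b) `f_M` is a top inverse. -/
theorem top_inverse_case (M : ℝ) (hM : 0 < M) (g : ℝ → ℝ)
    (hg : AnalyticOnNhd ℝ g (Set.Ioo (-(2 * M)) 0))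
    (f : ℝ → ℕ → ℝ)
    (hpmf : ∀ μ ∈ Set.Ioc (0 : ℝ) M, IsPMF (f μ))
    (hpgf : ∀ μ ∈ Set.Ioc (0 : ℝ) M,
      ∀ t ∈ Set.Ioo (-1 : ℝ) 1, ∑' n : ℕ, f μ n * t ^ n = g (μ * (t - 1)))
    (hmax : ∀ μ : ℝ, M < μ → ¬ ∃ h : ℕ → ℝ, IsPMF h ∧
      ∀ t ∈ Set.Ioo (max (-1 : ℝ) (1 - 2 * M / μ)) 1,
        ∑' n : ℕ, h n * t ^ n = g (μ * (t - 1))) :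
    (∀ μ ∈ Set.Ioo (0 : ℝ) M, f μ = thin (μ / M) (f M)) ∧
    (∀ p ∈ Set.Ioo (0 : ℝ) 1, ¬ ∃ h : ℕ → ℝ, IsPMF h ∧ thin p h = f M) := by
  have hfM : IsPMF (f M) := hpmf M ⟨hM, le_refl M⟩
  constructor
  · rintro μ ⟨hμ0, hμM⟩
    have hμ : μ ∈ Set.Ioc (0:ℝ) M := ⟨hμ0, hμM.le⟩
    have hfμ : IsPMF (f μ) := hpmf μ hμ
    set p := μ / M with hp
    have hp0 : 0 < p := div_pos hμ0 hM
    have hp1 : p < 1 := (div_lt_one hM).2 hμM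
    refine coeff_unique (fun n => ?_) (fun n => ?_) (fun t ht => ?_)
    · rw [abs_of_nonneg (hfμ.1 n)]
      exact le_hasSum hfμ.2 n fun j _ => hfμ.1 j
    · rw [abs_of_nonneg (thin_nonneg hfM hp0 hp1.le n)]
      exact le_hasSum (thin_hasSum_one hfM hp0 hp1.le) n
        fun j _ => thin_nonneg hfM hp0 hp1.le j
    · have ht' : t ∈ Set.Ioo (-1:ℝ) 1 := abs_lt.mp ht
      rw [hpgf μ hμ t ht']
      have h2 := (thin_hasSum hfM hp0 hp1.le (t := t) ht.le).tsum_eq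
      rw [h2]
      set q := 1 - p + p * t with hq
      have hq' : q ∈ Set.Ioo (-1:ℝ) 1 := by
        constructor <;> nlinarith [ht'.1, ht'.2]
      rw [hpgf M ⟨hM, le_refl M⟩ q hq']
      congr 1
      have : M * p = μ := by rw [hp]; field_simp
      rw [hq, hp]
      field_simp
      ring
  · rintro p ⟨hp0, hp1⟩ ⟨h, hhpmf, hth⟩
    have hMne : M ≠ 0 := hM.ne'
    set μ := M / p with hμdef
    have hμM : M < μ := by
      rw [hμdef, lt_div_iff₀ hp0]
      nlinarith
    refine hmax μ hμM ⟨h, hhpmf, fun s hs => ?_⟩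
    have hMμ : 2 * M / μ = 2 * p := by
      rw [hμdef]
      field_simp
    rw [hMμ] at hs
    have hmax' : max (-1 : ℝ) (1 - 2 * p) = 1 - 2 * p := by
      rw [max_eq_right]
      linarith
    rw [hmax'] at hs
    obtain ⟨hs1, hs2⟩ := hs
    set t := 1 + (s - 1) / p with htd
    have hpt : 1 - p + p * t = s := by
      rw [htd]
      field_simp
      ring
    have ht' : t ∈ Set.Ioo (-1:ℝ) 1 := by
      constructor
      · have h2 : -2 < (s - 1) / p := by
          rw [lt_div_iff₀ hp0]
          nlinarith
        rw [htd]; linarith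
      · have h3 : (s - 1) / p < 0 := div_neg_of_neg_of_pos (by linarith) hp0
        rw [htd]; linarith
    have ht'' : |t| ≤ 1 := by
      rw [abs_le]
      exact ⟨ht'.1.le, ht'.2.le⟩
    have key := thin_hasSum hhpmf hp0 hp1.le ht''
    rw [hpt, hth] at key
    have : ∑' n : ℕ, h n * s ^ n = ∑' m : ℕ, f M m * t ^ m := key.tsum_eq.symm
    rw [this, hpgf M ⟨hM, le_refl M⟩ t ht']
    congr 1
    have hμp : μ * p = M := by rw [hμdef]; field_simp
    rw [htd, ← hμp]
    field_simp
    ring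
end

section
/- (Proposition 3.) Let r ≥ 1 and let Θ ⊆ ℝ^r be a nonempty open convex cone. For each θ ∈ Θ let f_θ be a probability mass function on ℕ with pgf Φ(t, θ) = Σ_n f_θ(n) t^n, and assume θ ↦ Φ(t, θ) is continuous on Θ for each fixed t ∈ (0,1). Then Φ(t, θ₁ + θ₂) = Φ(t, θ₁) · Φ(t, θ₂) for all θ₁, θ₂ ∈ Θ and t ∈ (0,1) (closure under addition) if and only if there exist functions α₁, …, α_r : (0,1) → ℝ, not depending on θ, such that Φ(t, θ) = exp(Σ_{i=1}^r α_i(t) θ_i) for all θ ∈ Θ and t ∈ (0,1). (Note that Φ(t, θ) > 0 for t ∈ (0,1) since f_θ is a pmf.) -/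
open scoped BigOperators

lemma cone_linear {r : ℕ} (hr : 1 ≤ r) (Θ : Set (Fin r → ℝ))
    (hopen : IsOpen Θ) (hne : Θ.Nonempty)
    (hcone : ∀ c : ℝ, 0 < c → ∀ θ ∈ Θ, c • θ ∈ Θ)
    (hadd : ∀ θ₁ ∈ Θ, ∀ θ₂ ∈ Θ, θ₁ + θ₂ ∈ Θ)
    (L : (Fin r → ℝ) → ℝ)
    (hLadd : ∀ θ₁ ∈ Θ, ∀ θ₂ ∈ Θ, L (θ₁ + θ₂) = L θ₁ + L θ₂)
    (hLcont : ContinuousOn L Θ) :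
    ∃ a : Fin r → ℝ, ∀ θ ∈ Θ, L θ = ∑ i, a i * θ i := by
  haveI : Nonempty (Fin r) := Fin.pos_iff_nonempty.mp hr
  -- natural homogeneity
  have hnat : ∀ θ ∈ Θ, ∀ n : ℕ, L (((n : ℝ) + 1) • θ) = ((n : ℝ) + 1) * L θ := by
    intro θ hθ n
    induction n with
    | zero => simp
    | succ n ih =>
      have hmem : ((n : ℝ) + 1) • θ ∈ Θ := hcone _ (by positivity) _ hθ
      have : (((n : ℕ) + 1 : ℕ) : ℝ) + 1 = ((n : ℝ) + 1) + 1 := by push_cast; ring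
      rw [this, add_smul, one_smul, hLadd _ hmem _ hθ, ih]
      ring
  have hnat' : ∀ θ ∈ Θ, ∀ n : ℕ, 0 < n → L ((n : ℝ) • θ) = (n : ℝ) * L θ := by
    intro θ hθ n hn
    obtain ⟨k, rfl⟩ : ∃ k, n = k + 1 := ⟨n - 1, by omega⟩
    have := hnat θ hθ k
    push_cast
    push_cast at this
    exact this
  -- rational homogeneity
  have hrat : ∀ θ ∈ Θ, ∀ q : ℚ, 0 < q → L ((q : ℝ) • θ) = (q : ℝ) * L θ := by
    intro θ hθ q hq
    have hnum : 0 < q.num := Rat.num_pos.mpr hq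
    set m : ℕ := q.num.toNat with hm
    have hmpos : 0 < m := by omega
    have hden : 0 < q.den := q.pos
    have hdq : (q.den : ℝ) * (q : ℝ) = (m : ℝ) := by
      rw [Rat.cast_def]
      field_simp
      rw [hm]
      norm_cast
      omega
    have hqθ : (q : ℝ) • θ ∈ Θ := hcone _ (by exact_mod_cast hq) _ hθ
    have h1 : L ((q.den : ℝ) • ((q : ℝ) • θ)) = (q.den : ℝ) * L ((q : ℝ) • θ) :=
      hnat' _ hqθ q.den hden
    rw [smul_smul, hdq, hnat' θ hθ m hmpos] at h1
    have hdne : (q.den : ℝ) ≠ 0 := by positivity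
    have h2 : (q.den:ℝ) * L ((q:ℝ) • θ) = (q.den:ℝ) * ((q:ℝ) * L θ) := by
      rw [← h1, ← hdq]; ring
    exact mul_left_cancel₀ hdne h2
  -- real homogeneity
  have hreal : ∀ θ ∈ Θ, ∀ c : ℝ, 0 < c → L (c • θ) = c * L θ := by
    intro θ hθ c hc
    set g : ℝ → ℝ := fun c => L (c • θ) - c * L θ with hg
    have hmaps : Set.MapsTo (fun c : ℝ => c • θ) (Set.Ioi 0) Θ := fun x hx => hcone x hx θ hθ
    have hgcont : ContinuousOn g (Set.Ioi 0) := by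
      apply ContinuousOn.sub
      · exact hLcont.comp ((continuous_id.smul continuous_const).continuousOn) hmaps
      · exact (continuous_id.mul continuous_const).continuousOn
    have hdense : Set.Ioi (0:ℝ) ⊆ closure (Set.Ioi (0:ℝ) ∩ Set.range ((↑) : ℚ → ℝ)) :=
      Dense.open_subset_closure_inter Rat.denseRange_cast isOpen_Ioi
    have hzero : ∀ x ∈ Set.Ioi (0:ℝ) ∩ Set.range ((↑) : ℚ → ℝ), g x = 0 := by
      rintro x ⟨hx, q, rfl⟩
      have hq : 0 < q := by exact_mod_cast (Set.mem_Ioi.mp hx)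
      simp [hg, hrat θ hθ q hq]
    have hc' : c ∈ closure (Set.Ioi (0:ℝ) ∩ Set.range ((↑) : ℚ → ℝ)) := hdense hc
    haveI : (nhdsWithin c (Set.Ioi (0:ℝ) ∩ Set.range ((↑) : ℚ → ℝ))).NeBot :=
      mem_closure_iff_nhdsWithin_neBot.mp hc'
    have h1 : Filter.Tendsto g (nhdsWithin c (Set.Ioi (0:ℝ) ∩ Set.range ((↑) : ℚ → ℝ)))
        (nhds (g c)) := (hgcont c hc).mono Set.inter_subset_left
    have h2 : Filter.Tendsto g (nhdsWithin c (Set.Ioi (0:ℝ) ∩ Set.range ((↑) : ℚ → ℝ)))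
        (nhds 0) := by
      apply Filter.Tendsto.congr' _ tendsto_const_nhds
      filter_upwards [eventually_mem_nhdsWithin] with x hx
      exact (hzero x hx).symm
    have : g c = 0 := tendsto_nhds_unique h1 h2
    have := sub_eq_zero.mp this
    linarith [this]
  -- sums of members
  have hsum : ∀ (s : Finset (Fin r)), s.Nonempty → ∀ (w : Fin r → (Fin r → ℝ)),
      (∀ i, w i ∈ Θ) → ((∑ i ∈ s, w i) ∈ Θ ∧ L (∑ i ∈ s, w i) = ∑ i ∈ s, L (w i)) := by
    intro s
    induction s using Finset.induction_on with
    | empty => intro h; exact absurd rfl h.ne_empty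
    | @insert a s ha ih =>
      intro _ w hw
      rcases s.eq_empty_or_nonempty with rfl | hs
      · simpa using hw a
      · obtain ⟨hmem, hL⟩ := ih hs w hw
        rw [Finset.sum_insert ha, Finset.sum_insert ha]
        exact ⟨hadd _ (hw a) _ hmem, by rw [hLadd _ (hw a) _ hmem, hL]⟩
  -- positive linear combinations
  have hposlin : ∀ (c : Fin r → ℝ) (w : Fin r → (Fin r → ℝ)), (∀ i, 0 < c i) →
      (∀ i, w i ∈ Θ) → L (∑ i, c i • w i) = ∑ i, c i * L (w i) := by
    intro c w hc hw
    have h := hsum Finset.univ Finset.univ_nonempty (fun i => c i • w i)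
      (fun i => hcone _ (hc i) _ (hw i))
    rw [h.2]
    exact Finset.sum_congr rfl fun i _ => hreal _ (hw i) _ (hc i)
  -- build a basis inside Θ
  obtain ⟨θ₀, hθ₀⟩ := hne
  obtain ⟨δ, hδ, hball⟩ := Metric.isOpen_iff.mp hopen θ₀ hθ₀
  set S : ℝ := ∑ i, θ₀ i with hS
  set ε : ℝ := if δ / 2 = -S then δ / 3 else δ / 2 with hε
  have hεpos : 0 < ε := by
    rw [hε]; split <;> linarith
  have hεδ : ε < δ := by
    rw [hε]; split <;> linarith
  have hεS : ε + S ≠ 0 := by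
    rw [hε]; split
    · rename_i h; intro hc; linarith
    · rename_i h; intro hc; exact h (by linarith)
  set v : Fin r → (Fin r → ℝ) := fun i => θ₀ + Pi.single i ε with hv
  have hvmem : ∀ i, v i ∈ Θ := by
    intro i
    apply hball
    have : dist (v i) θ₀ = ‖(Pi.single i ε : Fin r → ℝ)‖ := by
      rw [dist_eq_norm, hv]; simp
    rw [Metric.mem_ball, this, Pi.norm_single]
    rwa [Real.norm_eq_abs, abs_of_pos hεpos]
  have hli : LinearIndependent ℝ v := by
    rw [Fintype.linearIndependent_iff]
    intro g hg
    have hj : ∀ j, (∑ i, g i) * θ₀ j + ε * g j = 0 := by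
      intro j
      have := congrFun hg j
      simp only [Finset.sum_apply, Pi.smul_apply, hv, Pi.add_apply, Pi.single_apply,
        smul_eq_mul, mul_add, Pi.zero_apply, mul_ite, mul_zero] at this
      rw [Finset.sum_add_distrib, Finset.sum_ite_eq Finset.univ j] at this
      simp only [Finset.mem_univ, if_true] at this
      rw [← Finset.sum_mul] at this
      linarith [this]
    have hsum0 : (∑ i, g i) * (S + ε) = 0 := by
      have := Finset.sum_congr rfl (fun j (_ : j ∈ Finset.univ) => hj j)
      rw [Finset.sum_add_distrib, ← Finset.mul_sum, ← Finset.mul_sum, ← hS] at this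
      simp only [Finset.sum_const_zero] at this
      nlinarith [this]
    have hg0 : (∑ i, g i) = 0 := by
      rcases mul_eq_zero.mp hsum0 with h | h
      · exact h
      · exact absurd (by linarith : ε + S = 0) hεS
    intro i
    have := hj i
    rw [hg0, zero_mul, zero_add] at this
    exact (mul_eq_zero.mp this).resolve_left hεpos.ne'
  have hcard : Fintype.card (Fin r) = Module.finrank ℝ (Fin r → ℝ) := by
    simp [Module.finrank_pi]
  let B : Module.Basis (Fin r) ℝ (Fin r → ℝ) := basisOfLinearIndependentOfCardEqFinrank hli hcard
  have hB : ⇑B = v := coe_basisOfLinearIndependentOfCardEqFinrank hli hcard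
  set F : (Fin r → ℝ) →ₗ[ℝ] ℝ := B.constr ℝ (fun i => L (v i)) with hF
  have hFv : ∀ i, F (v i) = L (v i) := by
    intro i
    have := B.constr_basis ℝ (fun i => L (v i)) i
    rwa [hB] at this
  have hkey : ∀ θ ∈ Θ, L θ = F θ := by
    intro θ hθ
    set c : Fin r → ℝ := fun i => B.repr θ i with hc
    have hrep : ∑ i, c i • v i = θ := by
      have := B.sum_repr θ
      rwa [hB] at this
    set N : ℝ := 1 + ∑ i, |c i| with hN
    have hcN : ∀ i, 0 < c i + N := by
      intro i
      have h1 : |c i| ≤ ∑ j, |c j| :=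
        Finset.single_le_sum (fun j _ => abs_nonneg (c j)) (Finset.mem_univ i)
      have h2 : -(c i) ≤ |c i| := neg_le_abs (c i)
      rw [hN]; linarith
    have hNpos : 0 < N := by
      have : (0:ℝ) ≤ ∑ i, |c i| := Finset.sum_nonneg fun i _ => abs_nonneg _
      rw [hN]; linarith
    have hsumN : (∑ i, N • v i) ∈ Θ ∧ L (∑ i, N • v i) = ∑ i, L (N • v i) :=
      hsum Finset.univ Finset.univ_nonempty _ (fun i => hcone _ hNpos _ (hvmem i))
    have hA : L (θ + ∑ i, N • v i) = L θ + ∑ i, N * L (v i) := by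
      rw [hLadd _ hθ _ hsumN.1, hsumN.2]
      congr 1
      exact Finset.sum_congr rfl fun i _ => hreal _ (hvmem i) _ hNpos
    have hBrep : θ + ∑ i, N • v i = ∑ i, (c i + N) • v i := by
      rw [← hrep]
      rw [← Finset.sum_add_distrib]
      exact Finset.sum_congr rfl fun i _ => (add_smul (c i) N (v i)).symm
    have hB2 : L (θ + ∑ i, N • v i) = ∑ i, (c i + N) * L (v i) := by
      rw [hBrep]
      exact hposlin _ _ hcN hvmem
    have hLθ : L θ = ∑ i, c i * L (v i) := by
      have := hA.symm.trans hB2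
      have hexp : ∑ i, (c i + N) * L (v i) = (∑ i, c i * L (v i)) + ∑ i, N * L (v i) := by
        rw [← Finset.sum_add_distrib]
        exact Finset.sum_congr rfl fun i _ => by ring
      rw [hexp] at this
      linarith
    have hFθ : F θ = ∑ i, c i * L (v i) := by
      conv_lhs => rw [← hrep]
      rw [map_sum]
      exact Finset.sum_congr rfl fun i _ => by rw [map_smul, hFv, smul_eq_mul]
    rw [hLθ, hFθ]
  refine ⟨fun i => F (Pi.single i 1), fun θ hθ => ?_⟩
  rw [hkey θ hθ, LinearMap.pi_apply_eq_sum_univ F θ]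
  refine Finset.sum_congr rfl fun i _ => ?_
  have hse : (fun j => if i = j then (1:ℝ) else 0) = Pi.single i 1 := by
    funext j; rw [Pi.single_apply]; simp [eq_comm]
  rw [hse, smul_eq_mul, mul_comm]

lemma pgf_pos {f : ℕ → ℝ} (hf : IsPMF f) {t : ℝ} (ht : t ∈ Set.Ioo (0:ℝ) 1) :
    0 < ∑' n : ℕ, f n * t ^ n := by
  have hsummable : Summable (fun n => f n * t ^ n) := by
    apply Summable.of_nonneg_of_le
      (fun n => mul_nonneg (hf.1 n) (pow_nonneg ht.1.le n))
      (fun n => ?_) hf.2.summable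
    calc f n * t ^ n ≤ f n * 1 := by
          apply mul_le_mul_of_nonneg_left _ (hf.1 n)
          exact pow_le_one₀ ht.1.le ht.2.le
      _ = f n := mul_one _
  obtain ⟨n, hn⟩ : ∃ n, f n ≠ 0 := by
    by_contra h
    push_neg at h
    have : HasSum f 0 := by
      have : f = 0 := funext h
      rw [this]; exact hasSum_zero
    exact one_ne_zero (hf.2.unique this)
  exact Summable.tsum_pos hsummable (fun n => mul_nonneg (hf.1 n) (pow_nonneg ht.1.le n)) n
    (mul_pos (lt_of_le_of_ne (hf.1 n) (Ne.symm hn)) (pow_pos ht.1 n))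

/-- Proposition 3: a family of pmfs `f_θ` on `ℕ` indexed by a nonempty open
convex cone `Θ ⊆ ℝ^r`, with pgf `Φ(t,θ)` continuous in `θ` for each fixed `t ∈ (0,1)`, is
closed under addition (`Φ(t,θ₁+θ₂) = Φ(t,θ₁)Φ(t,θ₂)`) if and only if there are functions
`α_1, …, α_r` of `t` alone with `Φ(t,θ) = exp(∑ α_i(t) θ_i)`. -/
theorem proposition3 (r : ℕ) (hr : 1 ≤ r) (Θ : Set (Fin r → ℝ)) (hne : Θ.Nonempty)
    (hopen : IsOpen Θ) (hconv : Convex ℝ Θ)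
    (hcone : ∀ c : ℝ, 0 < c → ∀ θ ∈ Θ, c • θ ∈ Θ)
    (f : (Fin r → ℝ) → ℕ → ℝ) (hpmf : ∀ θ ∈ Θ, IsPMF (f θ))
    (hcont : ∀ t ∈ Set.Ioo (0 : ℝ) 1,
      ContinuousOn (fun θ => ∑' n : ℕ, f θ n * t ^ n) Θ) :
    (∀ θ₁ ∈ Θ, ∀ θ₂ ∈ Θ, ∀ t ∈ Set.Ioo (0 : ℝ) 1,
        ∑' n : ℕ, f (θ₁ + θ₂) n * t ^ n
          = (∑' n : ℕ, f θ₁ n * t ^ n) * (∑' n : ℕ, f θ₂ n * t ^ n)) ↔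
    (∃ α : Fin r → ℝ → ℝ, ∀ θ ∈ Θ, ∀ t ∈ Set.Ioo (0 : ℝ) 1,
        ∑' n : ℕ, f θ n * t ^ n = Real.exp (∑ i : Fin r, α i t * θ i)) := by
  have hadd : ∀ θ₁ ∈ Θ, ∀ θ₂ ∈ Θ, θ₁ + θ₂ ∈ Θ := by
    intro θ₁ h1 θ₂ h2
    have hmid : (1/2 : ℝ) • θ₁ + (1/2 : ℝ) • θ₂ ∈ Θ :=
      hconv h1 h2 (by norm_num) (by norm_num) (by norm_num)
    have := hcone 2 (by norm_num) _ hmid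
    rwa [smul_add, smul_smul, smul_smul, (by norm_num : (2:ℝ) * (1/2) = 1), one_smul,
      one_smul] at this
  have hpos : ∀ θ ∈ Θ, ∀ t ∈ Set.Ioo (0:ℝ) 1, 0 < ∑' n : ℕ, f θ n * t ^ n :=
    fun θ hθ t ht => pgf_pos (hpmf θ hθ) ht
  constructor
  · intro h
    have key : ∀ t ∈ Set.Ioo (0:ℝ) 1, ∃ a : Fin r → ℝ, ∀ θ ∈ Θ,
        Real.log (∑' n : ℕ, f θ n * t ^ n) = ∑ i, a i * θ i := by
      intro t ht
      apply cone_linear hr Θ hopen hne hcone hadd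
      · intro θ₁ h1 θ₂ h2
        rw [h θ₁ h1 θ₂ h2 t ht]
        exact Real.log_mul (hpos θ₁ h1 t ht).ne' (hpos θ₂ h2 t ht).ne'
      · exact (hcont t ht).log (fun θ hθ => (hpos θ hθ t ht).ne')
    refine ⟨fun i t => if ht : t ∈ Set.Ioo (0:ℝ) 1 then Classical.choose (key t ht) i else 0,
      fun θ hθ t ht => ?_⟩
    have hspec := Classical.choose_spec (key t ht) θ hθ
    have : ∑ i, (if ht' : t ∈ Set.Ioo (0:ℝ) 1 then Classical.choose (key t ht') i else 0) * θ i
        = ∑ i, Classical.choose (key t ht) i * θ i := by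
      refine Finset.sum_congr rfl fun i _ => ?_
      rw [dif_pos ht]
    rw [this, ← hspec, Real.exp_log (hpos θ hθ t ht)]
  · rintro ⟨α, hα⟩ θ₁ h1 θ₂ h2 t ht
    rw [hα _ (hadd θ₁ h1 θ₂ h2) t ht, hα _ h1 t ht, hα _ h2 t ht, ← Real.exp_add]
    congr 1
    rw [← Finset.sum_add_distrib]
    refine Finset.sum_congr rfl fun i _ => ?_
    simp [mul_add]
end

section
/- (Example 3, general claim.) Let f be a probability mass function on ℕ with f(k) > 0 for every k ∈ ℕ, and suppose that f(2k+1)/f(2k) → ∞ as k → ∞. Then f is a top inverse: for every p ∈ (0,1), there is no probability mass function h on ℕ with T_p h = f. -/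
open scoped BigOperators ENNReal

/-- Key binomial inequality: `C(m+k+2, m+1)^2 ≤ 4 C(m+k+2, m) C(m+k+2, m+2)`. -/
lemma choose_sq_le_real (m k : ℕ) :
    (((m + k + 2).choose (m + 1) : ℝ)) ^ 2 ≤
      4 * ((m + k + 2).choose m : ℝ) * ((m + k + 2).choose (m + 2) : ℝ) := by
  set N := m + k + 2 with hN
  have e1 := Nat.choose_succ_right_eq N m
  have e2 := Nat.choose_succ_right_eq N (m + 1)
  have h1 : N - m = k + 2 := by omega
  have h2 : N - (m + 1) = k + 1 := by omega
  rw [h1] at e1; rw [h2] at e2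
  have eN : (N.choose (m + 1)) ^ 2 * ((m + 1) * (k + 1)) =
      N.choose m * N.choose (m + 2) * ((k + 2) * (m + 2)) := by
    calc (N.choose (m + 1)) ^ 2 * ((m + 1) * (k + 1))
        = (N.choose (m + 1) * (m + 1)) * (N.choose (m + 1) * (k + 1)) := by ring
      _ = (N.choose m * (k + 2)) * (N.choose (m + 2) * (m + 2)) := by rw [e1, ← e2]
      _ = N.choose m * N.choose (m + 2) * ((k + 2) * (m + 2)) := by ring
  have eNR : ((N.choose (m + 1) : ℝ)) ^ 2 * (((m : ℝ) + 1) * ((k : ℝ) + 1)) =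
      (N.choose m : ℝ) * (N.choose (m + 2) : ℝ) * (((k : ℝ) + 2) * ((m : ℝ) + 2)) := by
    exact_mod_cast congrArg (Nat.cast : ℕ → ℝ) eN
  have hA : (0 : ℝ) ≤ (N.choose m : ℝ) * (N.choose (m + 2) : ℝ) := by positivity
  have hm0 : (0 : ℝ) ≤ (m : ℝ) := Nat.cast_nonneg m
  have hk0 : (0 : ℝ) ≤ (k : ℝ) := Nat.cast_nonneg k
  have hmk : (((k : ℝ) + 2) * ((m : ℝ) + 2)) ≤ 4 * (((m : ℝ) + 1) * ((k : ℝ) + 1)) := by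
    nlinarith
  have hpos : (0 : ℝ) < ((m : ℝ) + 1) * ((k : ℝ) + 1) := by positivity
  nlinarith [mul_le_mul_of_nonneg_left hmk hA]

set_option maxHeartbeats 2000000 in
/-- Example 3, general claim: if `f` is a pmf on `ℕ` with `f(k) > 0` for
all `k` and `f(2k+1)/f(2k) → ∞`, then `f` is a top inverse: for every `p ∈ (0,1)` there
is no pmf `h` with `T_p h = f`. -/
theorem top_inverse_of_ratio_tendsto_atTop (f : ℕ → ℝ) (hf : IsPMF f)
    (hpos : ∀ k : ℕ, 0 < f k)
    (hlim : Filter.Tendsto (fun k : ℕ => f (2 * k + 1) / f (2 * k)) Filter.atTop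
      Filter.atTop)
    (p : ℝ) (hp : p ∈ Set.Ioo (0 : ℝ) 1) :
    ¬ ∃ h : ℕ → ℝ, IsPMF h ∧ thin p h = f := by
  rintro ⟨h, ⟨hnn, hsumh⟩, hth⟩
  obtain ⟨hp0, hp1⟩ := hp
  have hq0 : (0 : ℝ) < 1 - p := by linarith
  set q : ℝ := 1 - p with hqdef
  set g : ℕ → ℕ → ℝ := fun m k => h (m + k) * ((m + k).choose m : ℝ) * p ^ m * q ^ k with hg
  have hfm : ∀ m, f m = ∑' k, g m k := by
    intro m; rw [← hth]; rfl
  have hgnn : ∀ m k, 0 ≤ g m k := by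
    intro m k
    exact mul_nonneg (mul_nonneg (mul_nonneg (hnn _) (Nat.cast_nonneg _))
      (pow_nonneg hp0.le _)) (pow_nonneg hq0.le _)
  have hgs : ∀ m, Summable (g m) := by
    intro m
    by_contra hc
    have h0 := tsum_eq_zero_of_not_summable hc
    have := hpos m
    rw [hfm m, h0] at this
    exact lt_irrefl _ this
  -- key master inequality
  have key : ∀ m, ∀ s : ℝ, 0 < s →
      f (m + 1) ≤ (p / q) * f m + (s * f m + s⁻¹ * f (m + 2)) := by
    intro m s hs
    -- pointwise bound for the tail
    have hpt : ∀ k, g (m + 1) (k + 1) ≤ s * g m (k + 2) + s⁻¹ * g (m + 2) k := by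
      intro k
      have ea : m + 1 + (k + 1) = m + k + 2 := by omega
      have eb : m + (k + 2) = m + k + 2 := by omega
      have ec : m + 2 + k = m + k + 2 := by omega
      simp only [hg, ea, eb, ec]
      set w := h (m + k + 2) with hw
      set A := ((m + k + 2).choose m : ℝ) with hA
      set B := ((m + k + 2).choose (m + 1) : ℝ) with hB
      set Cc := ((m + k + 2).choose (m + 2) : ℝ) with hCc
      have hw0 : 0 ≤ w := hnn _
      have hA0 : (0 : ℝ) ≤ A := Nat.cast_nonneg _
      have hB0 : (0 : ℝ) ≤ B := Nat.cast_nonneg _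
      have hC0 : (0 : ℝ) ≤ Cc := Nat.cast_nonneg _
      have hBsq : B ^ 2 ≤ 4 * A * Cc := choose_sq_le_real m k
      set x := w * B * p ^ (m + 1) * q ^ (k + 1) with hx
      set a := w * A * p ^ m * q ^ (k + 2) with ha
      set b := w * Cc * p ^ (m + 2) * q ^ k with hb
      have hx0 : 0 ≤ x := by
        exact mul_nonneg (mul_nonneg (mul_nonneg hw0 hB0) (pow_nonneg hp0.le _))
          (pow_nonneg hq0.le _)
      have ha0 : 0 ≤ a := by
        exact mul_nonneg (mul_nonneg (mul_nonneg hw0 hA0) (pow_nonneg hp0.le _))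
          (pow_nonneg hq0.le _)
      have hb0 : 0 ≤ b := by
        exact mul_nonneg (mul_nonneg (mul_nonneg hw0 hC0) (pow_nonneg hp0.le _))
          (pow_nonneg hq0.le _)
      have hc2 : (0 : ℝ) ≤ (w * p ^ (m + 1) * q ^ (k + 1)) ^ 2 := sq_nonneg _
      have hxx : x ^ 2 ≤ 4 * (a * b) := by
        have e1 : x ^ 2 = (w * p ^ (m + 1) * q ^ (k + 1)) ^ 2 * B ^ 2 := by
          rw [hx]; ring
        have e2 : a * b = (w * p ^ (m + 1) * q ^ (k + 1)) ^ 2 * (A * Cc) := by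
          rw [ha, hb]; ring
        rw [e1, e2]
        nlinarith [mul_le_mul_of_nonneg_left hBsq hc2]
      have hu0 : 0 ≤ s ^ 2 * a + b := by positivity
      have hsx0 : 0 ≤ s * x := mul_nonneg hs.le hx0
      have hsq : s ^ 2 * x ^ 2 ≤ s ^ 2 * (4 * (a * b)) :=
        mul_le_mul_of_nonneg_left hxx (sq_nonneg s)
      have h1 : s * x ≤ s ^ 2 * a + b := by
        nlinarith [sq_nonneg (s ^ 2 * a - b), hsq, hu0, hsx0]
      have h2 : x ≤ (s ^ 2 * a + b) / s := (le_div_iff₀ hs).mpr (by linarith [h1])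
      have h3 : (s ^ 2 * a + b) / s = s * a + s⁻¹ * b := by
        field_simp
      rw [h3] at h2
      exact h2
    have hs1 : Summable (fun k => g (m + 1) (k + 1)) := (summable_nat_add_iff 1).2 (hgs (m + 1))
    have hs2 : Summable (fun k => g m (k + 2)) := (summable_nat_add_iff 2).2 (hgs m)
    have hs3 : Summable (fun k => s * g m (k + 2) + s⁻¹ * g (m + 2) k) :=
      (hs2.mul_left s).add ((hgs (m + 2)).mul_left s⁻¹)
    have htail2 : (∑' k, g m (k + 2)) ≤ f m := by
      have e0 : f m = g m 0 + ∑' k, g m (k + 1) := by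
        rw [hfm m]; exact Summable.tsum_eq_zero_add (hgs m)
      have e1 : (∑' k, g m (k + 1)) = g m 1 + ∑' k, g m (k + 2) := by
        have := Summable.tsum_eq_zero_add (f := fun k => g m (k + 1)) ((summable_nat_add_iff 1).2 (hgs m))
        simpa using this
      linarith [hgnn m 0, hgnn m 1, e0, e1 ▸ e0]
    have htail : (∑' k, g (m + 1) (k + 1)) ≤ s * f m + s⁻¹ * f (m + 2) := by
      calc (∑' k, g (m + 1) (k + 1))
          ≤ ∑' k, (s * g m (k + 2) + s⁻¹ * g (m + 2) k) := Summable.tsum_le_tsum hpt hs1 hs3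
        _ = s * (∑' k, g m (k + 2)) + s⁻¹ * (∑' k, g (m + 2) k) := by
            rw [Summable.tsum_add (hs2.mul_left s) ((hgs (m + 2)).mul_left s⁻¹),
              tsum_mul_left, tsum_mul_left]
        _ ≤ s * f m + s⁻¹ * f (m + 2) := by
            have h1 : s * (∑' k, g m (k + 2)) ≤ s * f m :=
              mul_le_mul_of_nonneg_left htail2 hs.le
            have h2 : s⁻¹ * (∑' k, g (m + 2) k) = s⁻¹ * f (m + 2) := by rw [← hfm]
            linarith
    have hbd : g (m + 1) 0 ≤ (p / q) * f m := by
      have hgm1 : g m 1 ≤ f m := by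
        rw [hfm m]; exact Summable.le_tsum (hgs m) 1 fun j _ => hgnn m j
      have hgm1v : g m 1 = h (m + 1) * ((m : ℝ) + 1) * p ^ m * q := by
        simp only [hg]
        have : ((m + 1).choose m : ℝ) = (m : ℝ) + 1 := by
          rw [Nat.choose_succ_self_right]; push_cast; ring
        rw [this]; ring
      have hg0v : g (m + 1) 0 = h (m + 1) * p ^ (m + 1) := by
        simp [hg]
      have heq : (p / q) * (h (m + 1) * ((m : ℝ) + 1) * p ^ m * q) =
          h (m + 1) * ((m : ℝ) + 1) * p ^ (m + 1) := by
        field_simp; ring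
      have hle : h (m + 1) * p ^ (m + 1) ≤ h (m + 1) * ((m : ℝ) + 1) * p ^ (m + 1) := by
        nlinarith [mul_nonneg (hnn (m + 1)) (pow_nonneg hp0.le (m + 1)), (Nat.cast_nonneg m : (0:ℝ) ≤ (m:ℝ))]
      have hpq : (0 : ℝ) ≤ p / q := by positivity
      calc g (m + 1) 0 = h (m + 1) * p ^ (m + 1) := hg0v
        _ ≤ h (m + 1) * ((m : ℝ) + 1) * p ^ (m + 1) := hle
        _ = (p / q) * (h (m + 1) * ((m : ℝ) + 1) * p ^ m * q) := heq.symm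
        _ = (p / q) * g m 1 := by rw [hgm1v]
        _ ≤ (p / q) * f m := mul_le_mul_of_nonneg_left hgm1 hpq
    have e0 : f (m + 1) = g (m + 1) 0 + ∑' k, g (m + 1) (k + 1) := by
      rw [hfm (m + 1)]; exact Summable.tsum_eq_zero_add (hgs (m + 1))
    linarith
  -- ratio recursion
  set Cq : ℝ := p / q with hCq
  have hCq0 : 0 ≤ Cq := by positivity
  have hr : ∀ m, 3 / 16 * (f (m + 1) / f m) - Cq / 4 ≤ f (m + 2) / f (m + 1) := by
    intro m
    have hfm0 := hpos m
    have hfm1 := hpos (m + 1)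
    have hfm2 := hpos (m + 2)
    have hspos : 0 < f (m + 1) / (4 * f m) := by positivity
    have hk := key m (f (m + 1) / (4 * f m)) hspos
    have h1 : (f (m + 1) / (4 * f m)) * f m = f (m + 1) / 4 := by
      field_simp
    have h2 : (f (m + 1) / (4 * f m))⁻¹ * f (m + 2) =
        4 * f m * (f (m + 2) / f (m + 1)) := by
      rw [inv_div]
      ring
    rw [h1, h2] at hk
    have hrf : (f (m + 1) / f m) * f m = f (m + 1) :=
      div_mul_cancel₀ _ (ne_of_gt hfm0)
    have hvf : (f (m + 2) / f (m + 1)) * f (m + 1) = f (m + 2) :=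
      div_mul_cancel₀ _ (ne_of_gt hfm1)
    nlinarith [hk, hrf, hvf, hfm0, hfm1, hfm2]
  -- choose threshold
  set B : ℝ := 16 / 3 * (2 + Cq / 4) + 2 with hBdef
  have hB2 : (2 : ℝ) ≤ B := by rw [hBdef]; linarith
  have hB3 : (2 : ℝ) ≤ 3 / 16 * B - Cq / 4 := by rw [hBdef]; linarith
  obtain ⟨K, hK⟩ := Filter.eventually_atTop.mp (hlim.eventually_ge_atTop B)
  have hdouble : ∀ m, 2 * K ≤ m → 2 * f m ≤ f (m + 1) := by
    intro m hm
    rcases Nat.even_or_odd m with ⟨k, hk⟩ | ⟨k, hk⟩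
    · have hkK : K ≤ k := by omega
      have hBk := hK k hkK
      have hmk : 2 * k = m := by omega
      rw [hmk] at hBk
      have : (2 : ℝ) ≤ f (m + 1) / f m := le_trans hB2 hBk
      exact (le_div_iff₀ (hpos m)).mp this
    · have hkK : K ≤ k := by omega
      have hBk := hK k hkK
      have hrk := hr (2 * k)
      have hge : 3 / 16 * B - Cq / 4 ≤ f (2 * k + 2) / f (2 * k + 1) := by
        have : 3 / 16 * B ≤ 3 / 16 * (f (2 * k + 1) / f (2 * k)) := by linarith
        linarith
      have h2le : (2 : ℝ) ≤ f (2 * k + 2) / f (2 * k + 1) := le_trans hB3 hge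
      have hm1 : m = 2 * k + 1 := by omega
      have hm2 : m + 1 = 2 * k + 2 := by omega
      rw [hm1]
      have := (le_div_iff₀ (hpos (2 * k + 1))).mp h2le
      linarith
  -- geometric growth contradiction
  have hgr : ∀ n : ℕ, 2 ^ n * f (2 * K) ≤ f (2 * K + n) := by
    intro n
    induction n with
    | zero => simp
    | succ n ih =>
      have hd := hdouble (2 * K + n) (by omega)
      have h2 : 2 * (2 ^ n * f (2 * K)) ≤ 2 * f (2 * K + n) := by linarith
      have : (2 : ℝ) ^ (n + 1) * f (2 * K) = 2 * (2 ^ n * f (2 * K)) := by ring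
      rw [this]
      calc 2 * (2 ^ n * f (2 * K)) ≤ 2 * f (2 * K + n) := h2
        _ ≤ f (2 * K + n + 1) := hd
        _ = f (2 * K + (n + 1)) := by ring_nf
  have hfle1 : ∀ n, f n ≤ 1 := fun n => le_hasSum hf.2 n fun j _ => hf.1 j
  obtain ⟨n, hn⟩ := pow_unbounded_of_one_lt (1 / f (2 * K)) (one_lt_two (α := ℝ))
  have hgK := hpos (2 * K)
  have h1 := hgr n
  have h2 := hfle1 (2 * K + n)
  have h3 : (1 / f (2 * K)) * f (2 * K) < 2 ^ n * f (2 * K) :=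
    mul_lt_mul_of_pos_right hn hgK
  rw [one_div, inv_mul_cancel₀ (ne_of_gt hgK)] at h3
  linarith
end

section
/- Let h be a probability mass function on ℕ and p ∈ (0,1), and set f = T_p h. If f(n) > 0 for some n ∈ ℕ, then f(k) > 0 for every k ≤ n. Consequently, any pmf f on ℕ having a zero-gap — i.e., such that f(k) = 0 and f(n) > 0 for some k < n — is a top inverse: for every p ∈ (0,1) there is no pmf h with T_p h = f. -/
open scoped BigOperators ENNReal

lemma summable_thin_aux (h : ℕ → ℝ) (hh : IsPMF h) (p : ℝ) (hp0 : 0 < p) (hp1 : p < 1)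
    (m : ℕ) :
    Summable (fun k : ℕ => h (m + k) * ((m + k).choose m : ℝ) * p ^ m * (1 - p) ^ k) := by
  have hr0 : (0:ℝ) < 1 - p := by linarith
  have hg : Summable (fun k : ℕ => ((m + k : ℕ) : ℝ) ^ m * (1 - p) ^ k) := by
    have h1 : Summable (fun n : ℕ => (n : ℝ) ^ m * (1 - p) ^ n) :=
      summable_pow_mul_geometric_of_norm_lt_one m
        (by rw [Real.norm_eq_abs, abs_of_nonneg hr0.le]; linarith)
    have h2 : Summable (fun n : ℕ => ((n + m : ℕ) : ℝ) ^ m * (1 - p) ^ (n + m)) :=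
      (summable_nat_add_iff m).2 h1
    have h3 := h2.mul_right (((1 - p) ^ m)⁻¹)
    refine h3.congr fun k => ?_
    have hne : (1 - p) ^ m ≠ 0 := pow_ne_zero _ (by linarith)
    rw [pow_add]
    field_simp
    ring_nf
  refine Summable.of_nonneg_of_le (fun k => ?_) (fun k => ?_) hg
  · have := hh.1 (m + k)
    positivity
  · have hle1 : h (m + k) ≤ 1 := le_hasSum hh.2 (m + k) (fun i _ => hh.1 i)
    have hc : ((m + k).choose m : ℝ) ≤ ((m + k : ℕ) : ℝ) ^ m := by
      exact_mod_cast Nat.choose_le_pow (m + k) m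
    have hpm : p ^ m ≤ 1 := pow_le_one₀ hp0.le hp1.le
    calc h (m + k) * ((m + k).choose m : ℝ) * p ^ m * (1 - p) ^ k
        ≤ 1 * ((m + k : ℕ) : ℝ) ^ m * 1 * (1 - p) ^ k := by
          gcongr
      _ = ((m + k : ℕ) : ℝ) ^ m * (1 - p) ^ k := by ring

lemma thin_pos_down (h : ℕ → ℝ) (hh : IsPMF h) (p : ℝ) (hp : p ∈ Set.Ioo (0 : ℝ) 1) :
    ∀ n : ℕ, 0 < thin p h n → ∀ k ≤ n, 0 < thin p h k := by
  obtain ⟨hp0, hp1⟩ := hp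
  intro n hn k hk
  have hr0 : (0:ℝ) < 1 - p := by linarith
  obtain ⟨j, hj⟩ : ∃ j : ℕ,
      h (n + j) * ((n + j).choose n : ℝ) * p ^ n * (1 - p) ^ j ≠ 0 := by
    by_contra hc
    push_neg at hc
    have : thin p h n = 0 := by
      unfold thin
      simp only [hc, tsum_zero]
    simp [this] at hn
  have hhn : 0 < h (n + j) := by
    rcases lt_or_eq_of_le (hh.1 (n + j)) with h' | h'
    · exact h'
    · exact absurd (by simp [← h']) hj
  set N := n + j with hN
  have hkN : k ≤ N := le_trans hk (Nat.le_add_right n j)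
  have hkey : k + (N - k) = N := Nat.add_sub_cancel' hkN
  have hterm : 0 < h (k + (N - k)) * (((k + (N - k)).choose k : ℕ) : ℝ) * p ^ k *
      (1 - p) ^ (N - k) := by
    rw [hkey]
    have hc : 0 < (N.choose k : ℝ) := by exact_mod_cast Nat.choose_pos hkN
    positivity
  have hsum := summable_thin_aux h hh p hp0 hp1 k
  have hle := Summable.le_tsum hsum (N - k) (fun i _ => by
    have := hh.1 (k + i); positivity)
  exact lt_of_lt_of_le hterm hle

/-- if `h` is a pmf on `ℕ`, `p ∈ (0,1)` and `f = T_p h`, then `f(n) > 0`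
implies `f(k) > 0` for all `k ≤ n`; consequently any pmf with a zero-gap (some `k < n`
with `f(k) = 0` and `f(n) > 0`) is a top inverse. -/
theorem thin_pos_downward_and_zero_gap_top_inverse (h : ℕ → ℝ) (hh : IsPMF h)
    (p : ℝ) (hp : p ∈ Set.Ioo (0 : ℝ) 1) :
    (∀ n : ℕ, 0 < thin p h n → ∀ k ≤ n, 0 < thin p h k) ∧
    (∀ f : ℕ → ℝ, IsPMF f → (∃ k n : ℕ, k < n ∧ f k = 0 ∧ 0 < f n) →
      ∀ q ∈ Set.Ioo (0 : ℝ) 1, ¬ ∃ h' : ℕ → ℝ, IsPMF h' ∧ thin q h' = f) := by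
  refine ⟨thin_pos_down h hh p hp, ?_⟩
  rintro f hf ⟨k, n, hkn, hfk, hfn⟩ q hq ⟨h', hh', heq⟩
  have := thin_pos_down h' hh' q hq n (heq ▸ hfn) k hkn.le
  rw [heq, hfk] at this
  exact lt_irrefl 0 this
end
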